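/- Let Δ be a simplicial complex on {x_1,...,x_n}. Order the monomials u_F (F ∈ Δ) by any total order such that u_G > u_F whenever G ⊊ F. Then the face ideal J_Δ = (u_F : F ∈ Δ) has linear quotients with respect to this order: for every F ∈ Δ, the colon ideal (u_G : G ∈ Δ, u_G > u_F) : u_F is generated by the variables y_j with F\{x_j} ∈ Δ and x_j ∈ F, i.e., by {y_j : x_j ∈ F}. -/

import Mathlib

open MvPolynomial

lemma prodX_eq_monomial' {K : Type*} [CommSemiring K] {α σ : Type*}
    (s : Finset α) (f : α → σ) :
    (∏ i ∈ s, (X (f i) : MvPolynomial σ K)) =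
      monomial (∑ i ∈ s, Finsupp.single (f i) 1) 1 := by
  classical
  induction s using Finset.induction_on with
  | empty => simp
  | @insert a s h ih =>
      rw [Finset.prod_insert h, Finset.sum_insert h, ih, monomial_single_add, pow_one]

/-- the face ideal `J_Δ` has linear quotients: for any total order on faces
with `u_G > u_F` whenever `G ⊊ F`, the colon ideal `(u_G : u_G > u_F) : u_F` is generated
by the variables `{y_j : x_j ∈ F}`. -/
theorem stmt7 (n : ℕ) (K : Type*) [Field K]
    (Δ : Set (Finset (Fin n)))
    (hΔ : ∀ F ∈ Δ, ∀ G ⊆ F, G ∈ Δ)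
    (u : Finset (Fin n) → MvPolynomial (Fin n ⊕ Fin n) K)
    (hu : ∀ F, u F = (∏ i ∈ F, X (Sum.inl i)) * ∏ j ∈ Fᶜ, X (Sum.inr j))
    (gt' : Finset (Fin n) → Finset (Fin n) → Prop)
    (hasymm : ∀ G F, gt' G F → ¬ gt' F G)
    (htrans : ∀ A B C, gt' A B → gt' B C → gt' A C)
    (htotal : ∀ G F, G ≠ F → gt' G F ∨ gt' F G)
    (hrefine : ∀ G F : Finset (Fin n), G ⊂ F → gt' G F) :
    ∀ F ∈ Δ,
      (Ideal.span {p | ∃ G ∈ Δ, gt' G F ∧ p = u G}).colon (Ideal.span {u F}) =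
        Ideal.span {p | ∃ j ∈ F, p = X (Sum.inr j)} := by
  intro F hF
  classical
  set I : Ideal (MvPolynomial (Fin n ⊕ Fin n) K) :=
    Ideal.span {p | ∃ G ∈ Δ, gt' G F ∧ p = u G} with hIdef
  -- the generating set of the RHS as an image of variables
  have hset : {p : MvPolynomial (Fin n ⊕ Fin n) K | ∃ j ∈ F, p = X (Sum.inr j)} =
      X '' (Sum.inr '' (↑F : Set (Fin n))) := by
    ext q
    simp only [Set.mem_setOf_eq, Set.image_image, Set.mem_image, Finset.mem_coe]
    constructor
    · rintro ⟨j, hj, rfl⟩; exact ⟨j, hj, rfl⟩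
    · rintro ⟨j, hj, rfl⟩; exact ⟨j, hj, rfl⟩
  -- exponent of the monomial u F
  set d : (Fin n ⊕ Fin n) →₀ ℕ :=
    (∑ i ∈ F, Finsupp.single (Sum.inl i) 1) + ∑ j ∈ Fᶜ, Finsupp.single (Sum.inr j) 1 with hddef
  have huF : u F = monomial d 1 := by
    rw [hu, prodX_eq_monomial', prodX_eq_monomial', monomial_mul, one_mul]
  have hd : ∀ j ∈ F, d (Sum.inr j) = 0 := by
    intro j hj
    simp [hddef, Finsupp.single_apply, Finset.sum_apply', Finset.sum_ite_eq',
      Finset.mem_compl, hj]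
  apply le_antisymm
  · -- colon ⊆ (y_j : j ∈ F)
    intro p hp
    rw [Ideal.mem_colon_span_singleton] at hp
    -- every generator u G lies in the ideal (y_j : j ∈ F)
    have hIJ : I ≤ Ideal.span {p : MvPolynomial (Fin n ⊕ Fin n) K | ∃ j ∈ F, p = X (Sum.inr j)} := by
      rw [hIdef, Ideal.span_le]
      rintro q ⟨G, hGΔ, hgt, rfl⟩
      have hGF : ¬ F ⊆ G := by
        intro hsub
        rcases eq_or_ne F G with rfl | hne
        · exact hasymm _ _ hgt hgt
        · exact hasymm _ _ hgt (hrefine F G (lt_of_le_of_ne hsub hne))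
      obtain ⟨j, hjF, hjG⟩ := Finset.not_subset.mp hGF
      have hjc : j ∈ Gᶜ := Finset.mem_compl.mpr hjG
      have key : u G = ((∏ i ∈ G, X (Sum.inl i)) *
          ∏ j' ∈ Gᶜ.erase j, X (Sum.inr j')) * X (Sum.inr j) := by
        rw [hu, ← Finset.mul_prod_erase _ _ hjc]; ring
      rw [key]
      exact Ideal.mul_mem_left _ _ (Ideal.subset_span ⟨j, hjF, rfl⟩)
    have hpJ := hIJ hp
    rw [hset] at hpJ ⊢
    rw [mem_ideal_span_X_image] at hpJ ⊢
    intro m hm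
    have hmd : m + d ∈ (p * u F).support := by
      rw [mem_support_iff, huF, coeff_mul_monomial, mul_one]
      exact mem_support_iff.mp hm
    obtain ⟨i, hi, hne⟩ := hpJ _ hmd
    refine ⟨i, hi, ?_⟩
    obtain ⟨j, hj, rfl⟩ := hi
    rw [Finsupp.add_apply, hd j hj, add_zero] at hne
    exact hne
  · -- (y_j : j ∈ F) ⊆ colon
    rw [Ideal.span_le]
    rintro q ⟨j, hjF, rfl⟩
    rw [SetLike.mem_coe, Ideal.mem_colon_span_singleton]
    have hGΔ : F.erase j ∈ Δ := hΔ F hF _ (Finset.erase_subset j F)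
    have hgt : gt' (F.erase j) F := hrefine _ _ (Finset.erase_ssubset hjF)
    have hjc : j ∉ Fᶜ := by simp [hjF]
    have key : X (Sum.inr j) * u F = X (Sum.inl j) * u (F.erase j) := by
      rw [hu, hu, ← Finset.mul_prod_erase F _ hjF, Finset.compl_erase,
        Finset.prod_insert hjc]
      ring
    rw [key]
    exact Ideal.mul_mem_left _ _ (Ideal.subset_span ⟨F.erase j, hGΔ, hgt, rfl⟩)
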